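/- Let n ≥ 2 and let Λ ⊆ S^n be a closed subset such that the open set Ω = S^n \ Λ satisfies the weak Koebe–Maskit condition and has at least two connected components. Then Λ is doubly stable: for every ξ ∈ Λ there exists a circle C in S^n with ξ ∈ C such that every sequence of circles (C_k) in S^n converging to C satisfies that limsup (C_k ∩ Λ) contains at least two points. (This is the group-free form of the paper's Lemma 4.6.) -/

import Mathlib

open Metric Set
open Real RealInnerProductSpace

noncomputable section

/-- `Euc k` is the Euclidean space `ℝ^{k+1}`. -/
abbrev Euc (k : ℕ) : Type := EuclideanSpace ℝ (Fin (k+1))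

/-- The unit sphere `S^k ⊆ ℝ^{k+1}`. -/
def unitSphere (k : ℕ) : Set (Euc k) := Metric.sphere 0 1

/-- A circle in `S^n`: the intersection of `S^n` with a 2-dimensional affine
subspace of `ℝ^{n+1}`, provided this intersection is infinite. -/
def IsCircle (n : ℕ) (C : Set (Euc n)) : Prop :=
  ∃ P : AffineSubspace ℝ (Euc n),
    Module.finrank ℝ P.direction = 2 ∧ C = unitSphere n ∩ (P : Set (Euc n)) ∧ C.Infinite

/-- A codimension-one sphere in `S^m`: the intersection of `S^m` with an
`m`-dimensional affine subspace of `ℝ^{m+1}`, provided it is infinite. -/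
def IsCodimOneSphere (m : ℕ) (S : Set (Euc m)) : Prop :=
  ∃ H : AffineSubspace ℝ (Euc m),
    Module.finrank ℝ H.direction = m ∧ S = unitSphere m ∩ (H : Set (Euc m)) ∧ S.Infinite

/-- Convergence of a sequence of subsets in the Hausdorff distance. -/
def SetsConvergeTo {X : Type*} [MetricSpace X] (K : ℕ → Set X) (L : Set X) : Prop :=
  Filter.Tendsto (fun k => Metric.hausdorffDist (K k) L) Filter.atTop (nhds 0)

/-- `limsup` of a sequence of sets: `⋂_N closure (⋃_{k ≥ N} S_k)`. -/
def setLimsup {X : Type*} [TopologicalSpace X] (S : ℕ → Set X) : Set X :=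
  ⋂ N : ℕ, closure (⋃ k ≥ N, S k)

/-- The weak Koebe–Maskit condition: for every `ε > 0`, only finitely many
connected components of `Ω` have diameter greater than `ε`. -/
def WKM {X : Type*} [MetricSpace X] (Ω : Set X) : Prop :=
  ∀ ε > 0, {U : Set X | (∃ x ∈ Ω, U = connectedComponentIn Ω x) ∧ ε < Metric.diam U}.Finite

/-- `Λ ⊆ S^n` is doubly stable if every `ξ ∈ Λ` lies on a circle `C` such that for
every sequence of circles converging to `C` the limsup of the slices `C_k ∩ Λ`
contains at least two points. -/
def DoublyStable (n : ℕ) (Λ : Set (Euc n)) : Prop :=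
  ∀ ξ ∈ Λ, ∃ C : Set (Euc n), IsCircle n C ∧ ξ ∈ C ∧
    ∀ Ck : ℕ → Set (Euc n), (∀ k, IsCircle n (Ck k)) → SetsConvergeTo Ck C →
      (setLimsup (fun k => Ck k ∩ Λ)).Nontrivial

lemma trig_arc (a b m : ℝ) :
    ∃ lo hi : ℝ, (∀ θ ∈ Icc lo hi, m ≤ a * Real.cos θ + b * Real.sin θ) ∧
      (∀ θ : ℝ, m ≤ a * Real.cos θ + b * Real.sin θ →
        ∃ k : ℤ, θ - (k : ℝ) * (2 * π) ∈ Icc lo hi) := by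
  have hπ := Real.pi_pos
  set z : ℂ := ⟨a, b⟩ with hz
  set R := ‖z‖ with hR
  set φ := Complex.arg z with hφ
  have hR0 : 0 ≤ R := norm_nonneg z
  have hid : ∀ θ : ℝ, a * Real.cos θ + b * Real.sin θ = R * Real.cos (θ - φ) := by
    intro θ
    rcases eq_or_ne z 0 with h0 | h0
    · have ha : a = 0 := congrArg Complex.re h0
      have hb : b = 0 := congrArg Complex.im h0
      simp [hR, h0, ha, hb]
    · have hRne : R ≠ 0 := by simpa [hR] using norm_ne_zero_iff.2 h0
      have hca : Real.cos φ = a / R := by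
        simpa [hz, hR, hφ] using Complex.cos_arg h0
      have hsa : Real.sin φ = b / R := by
        simpa [hz, hR, hφ] using Complex.sin_arg z
      rw [Real.cos_sub, hca, hsa]
      field_simp
  have shift : ∀ θ : ℝ, |θ - (round ((θ - φ) / (2 * π)) : ℤ) * (2 * π) - φ| ≤ π := by
    intro θ
    set k : ℤ := round ((θ - φ) / (2 * π)) with hk
    have h1 : |(θ - φ) / (2 * π) - (k : ℝ)| ≤ 1 / 2 := by
      simpa [hk] using abs_sub_round ((θ - φ) / (2 * π))
    have h2 : θ - (k : ℝ) * (2 * π) - φ = ((θ - φ) / (2 * π) - (k : ℝ)) * (2 * π) := by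
      field_simp
      ring
    rw [h2, abs_mul, abs_of_pos (by linarith : (0:ℝ) < 2 * π)]
    nlinarith
  have hcosk : ∀ θ : ℝ, ∀ k : ℤ, Real.cos (θ - (k : ℝ) * (2 * π) - φ) = Real.cos (θ - φ) := by
    intro θ k
    have : θ - (k : ℝ) * (2 * π) - φ = (θ - φ) - (k : ℝ) * (2 * π) := by ring
    rw [this, Real.cos_sub_int_mul_two_pi]
  by_cases hm : R < m
  · refine ⟨1, 0, ?_, ?_⟩
    · intro θ hθ
      exact absurd (hθ.1.trans hθ.2) (by norm_num)
    · intro θ hθ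
      exfalso
      have h1 : R * Real.cos (θ - φ) ≤ R * 1 :=
        mul_le_mul_of_nonneg_left (Real.cos_le_one _) hR0
      rw [hid] at hθ
      nlinarith
  push_neg at hm
  by_cases hRz : R = 0
  · refine ⟨φ - π, φ + π, ?_, ?_⟩
    · intro θ _
      rw [hid, hRz]
      simpa using hm.trans_eq hRz
    · intro θ _
      refine ⟨round ((θ - φ) / (2 * π)), ?_⟩
      have h := abs_le.1 (shift θ)
      exact ⟨by linarith [h.1], by linarith [h.2]⟩
  · have hRpos : 0 < R := lt_of_le_of_ne hR0 (Ne.symm hRz)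
    set x₀ : ℝ := max (-1) (m / R) with hx₀
    have hx₀le : x₀ ≤ 1 := max_le (by norm_num) ((div_le_one hRpos).2 hm)
    have hx₀ge : -1 ≤ x₀ := le_max_left _ _
    set w := Real.arccos x₀ with hw
    have hw0 : 0 ≤ w := Real.arccos_nonneg _
    have hwπ : w ≤ π := Real.arccos_le_pi _
    have hcw : Real.cos w = x₀ := Real.cos_arccos hx₀ge hx₀le
    have hmRx : m ≤ R * x₀ := by
      rcases le_or_gt (-1) (m / R) with h | h
      · rw [hx₀, max_eq_right h]
        field_simp; exact le_rfl
      · rw [hx₀, max_eq_left h.le]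
        have : m < -R := by
          have := (div_lt_iff₀ hRpos).1 h
          linarith
        linarith
    refine ⟨φ - w, φ + w, ?_, ?_⟩
    · intro θ hθ
      have habs : |θ - φ| ≤ w := abs_le.2 ⟨by linarith [hθ.1], by linarith [hθ.2]⟩
      have h1 : Real.cos w ≤ Real.cos |θ - φ| :=
        Real.cos_le_cos_of_nonneg_of_le_pi (abs_nonneg _) hwπ habs
      rw [Real.cos_abs] at h1
      rw [hid]
      nlinarith
    · intro θ hθ
      refine ⟨round ((θ - φ) / (2 * π)), ?_⟩
      set k : ℤ := round ((θ - φ) / (2 * π)) with hk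
      set u := θ - (k : ℝ) * (2 * π) - φ with hu
      have hub : |u| ≤ π := shift θ
      have hcu : Real.cos u = Real.cos (θ - φ) := hcosk θ k
      rw [hid] at hθ
      have hcos1 : m / R ≤ Real.cos u := by
        rw [hcu]
        exact (div_le_iff₀ hRpos).2 (by linarith [hθ])
      have hcos2 : x₀ ≤ Real.cos u := max_le (Real.neg_one_le_cos u) hcos1
      have habs : |u| ≤ w := by
        by_contra hcon
        push_neg at hcon
        have := Real.cos_lt_cos_of_nonneg_of_le_pi hw0 hub hcon
        rw [Real.cos_abs] at this
        linarith [hcw ▸ hcos2]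
      have h := abs_le.1 habs
      exact ⟨by linarith [h.1], by linarith [h.2]⟩


lemma norm_key {n : ℕ} {e₁ e₂ : Euc n} (c : Euc n)
    (he11 : ⟪e₁, e₁⟫ = 1) (he22 : ⟪e₂, e₂⟫ = 1) (he12 : ⟪e₁, e₂⟫ = 0)
    (hce1 : ⟪c, e₁⟫ = 0) (hce2 : ⟪c, e₂⟫ = 0) (s t : ℝ) :
    ‖c + s • e₁ + t • e₂‖ ^ 2 = ‖c‖ ^ 2 + s ^ 2 + t ^ 2 := by
  have he21 : ⟪e₂, e₁⟫ = (0:ℝ) := by rw [real_inner_comm]; exact he12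
  have he1c : ⟪e₁, c⟫ = (0:ℝ) := by rw [real_inner_comm]; exact hce1
  have he2c : ⟪e₂, c⟫ = (0:ℝ) := by rw [real_inner_comm]; exact hce2
  rw [← real_inner_self_eq_norm_sq, ← real_inner_self_eq_norm_sq]
  simp only [inner_add_left, inner_add_right, real_inner_smul_left, real_inner_smul_right,
    he11, he22, he12, he21, he1c, he2c, hce1, hce2]
  ring

lemma exists_onb_pair {n : ℕ} (D : Submodule ℝ (Euc n)) (hD : Module.finrank ℝ D = 2) :
    ∃ e₁ e₂ : Euc n, e₁ ∈ D ∧ e₂ ∈ D ∧ ⟪e₁, e₁⟫ = 1 ∧ ⟪e₂, e₂⟫ = 1 ∧ ⟪e₁, e₂⟫ = 0 ∧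
      ∀ v ∈ D, ∃ s t : ℝ, v = s • e₁ + t • e₂ := by
  let b : OrthonormalBasis (Fin 2) ℝ D := (stdOrthonormalBasis ℝ D).reindex (finCongr hD)
  have hite := orthonormal_iff_ite.1 b.orthonormal
  refine ⟨(b 0 : Euc n), (b 1 : Euc n), (b 0).2, (b 1).2, ?_, ?_, ?_, ?_⟩
  · rw [real_inner_self_eq_norm_sq, ← Submodule.coe_norm, b.orthonormal.1 0]; norm_num
  · rw [real_inner_self_eq_norm_sq, ← Submodule.coe_norm, b.orthonormal.1 1]; norm_num
  · have := b.orthonormal.2 (show (0:Fin 2) ≠ 1 by decide); exact this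
  · intro v hv
    refine ⟨b.repr ⟨v, hv⟩ 0, b.repr ⟨v, hv⟩ 1, ?_⟩
    have h := congrArg (Subtype.val) (b.sum_repr ⟨v, hv⟩)
    rw [Fin.sum_univ_two] at h
    simpa using h.symm

set_option maxHeartbeats 1000000 in
lemma circle_param {n : ℕ} (P : AffineSubspace ℝ (Euc n))
    (hP : Module.finrank ℝ P.direction = 2) {p₁ p₂ : Euc n}
    (h₁ : p₁ ∈ unitSphere n ∩ (P : Set (Euc n)))
    (h₂ : p₂ ∈ unitSphere n ∩ (P : Set (Euc n))) (hne : p₁ ≠ p₂) :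
    ∃ (c e₁ e₂ : Euc n) (ρ : ℝ), 0 < ρ ∧
      ⟪e₁, e₁⟫ = 1 ∧ ⟪e₂, e₂⟫ = 1 ∧ ⟪e₁, e₂⟫ = 0 ∧
      unitSphere n ∩ (P : Set (Euc n)) =
        Set.range (fun θ : ℝ => c + (ρ * Real.cos θ) • e₁ + (ρ * Real.sin θ) • e₂) := by
  haveI : Nonempty P := ⟨⟨p₁, h₁.2⟩⟩
  obtain ⟨e₁, e₂, hmem1, hmem2, he11, he22, he12, hspan⟩ := exists_onb_pair P.direction hP
  obtain ⟨c, hcP, hcorth⟩ : ∃ c : Euc n, c ∈ P ∧ ∀ v ∈ P.direction, ⟪c, v⟫ = (0:ℝ) := by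
    refine ⟨(EuclideanGeometry.orthogonalProjection P 0 : Euc n),
      EuclideanGeometry.orthogonalProjection_mem 0, ?_⟩
    have h := EuclideanGeometry.orthogonalProjection_vsub_mem_direction_orthogonal P 0
    intro v hv
    have h2 : ((EuclideanGeometry.orthogonalProjection P 0 : Euc n)) ∈ P.directionᗮ := by
      simpa [vsub_eq_sub] using h
    rw [real_inner_comm]
    exact h2 v hv
  have hce1 : ⟪c, e₁⟫ = (0:ℝ) := hcorth _ hmem1
  have hce2 : ⟪c, e₂⟫ = (0:ℝ) := hcorth _ hmem2
  have key := norm_key c he11 he22 he12 hce1 hce2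
  have hcoord : ∀ p ∈ unitSphere n ∩ (P : Set (Euc n)),
      ∃ s t : ℝ, p = c + s • e₁ + t • e₂ ∧ s ^ 2 + t ^ 2 = 1 - ‖c‖ ^ 2 := by
    rintro p ⟨hpS, hpP⟩
    obtain ⟨s, t, hst⟩ := hspan (p - c) (AffineSubspace.vsub_mem_direction hpP hcP)
    have hpe : p = c + s • e₁ + t • e₂ := by
      rw [add_assoc]
      exact sub_eq_iff_eq_add'.1 hst
    have hnp : ‖p‖ = 1 := by simpa [unitSphere, mem_sphere_zero_iff_norm] using hpS
    have h4 := key s t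
    rw [← hpe, hnp] at h4
    exact ⟨s, t, hpe, by linarith⟩
  obtain ⟨s₁, t₁, hp₁, hst₁⟩ := hcoord p₁ h₁
  obtain ⟨s₂, t₂, hp₂, hst₂⟩ := hcoord p₂ h₂
  have hρ2pos : 0 < 1 - ‖c‖ ^ 2 := by
    rcases lt_or_ge 0 (1 - ‖c‖ ^ 2) with h | h
    · exact h
    · exfalso
      have h1s : s₁ = 0 := by nlinarith [sq_nonneg s₁, sq_nonneg t₁]
      have h1t : t₁ = 0 := by nlinarith [sq_nonneg s₁, sq_nonneg t₁]
      have h2s : s₂ = 0 := by nlinarith [sq_nonneg s₂, sq_nonneg t₂]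
      have h2t : t₂ = 0 := by nlinarith [sq_nonneg s₂, sq_nonneg t₂]
      apply hne
      rw [hp₁, hp₂, h1s, h1t, h2s, h2t]
  set ρ : ℝ := Real.sqrt (1 - ‖c‖ ^ 2) with hρdef
  have hρpos : 0 < ρ := Real.sqrt_pos.2 hρ2pos
  have hρsq : ρ ^ 2 = 1 - ‖c‖ ^ 2 := Real.sq_sqrt hρ2pos.le
  refine ⟨c, e₁, e₂, ρ, hρpos, he11, he22, he12, ?_⟩
  ext p
  constructor
  · intro hp
    obtain ⟨s, t, hpe, hst⟩ := hcoord p hp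
    have hz0 : (⟨s, t⟩ : ℂ) ≠ 0 := by
      intro h0
      have hs : s = 0 := congrArg Complex.re h0
      have ht : t = 0 := congrArg Complex.im h0
      rw [hs, ht] at hst
      simp at hst
      linarith
    have habs : ‖(⟨s, t⟩ : ℂ)‖ = ρ := by
      rw [Complex.norm_def, Complex.normSq_mk, hρdef]
      congr 1
      rw [← hst]; ring
    refine ⟨Complex.arg ⟨s, t⟩, ?_⟩
    have hcos : Real.cos (Complex.arg ⟨s, t⟩) = s / ρ := by
      rw [Complex.cos_arg hz0, habs]
    have hsin : Real.sin (Complex.arg ⟨s, t⟩) = t / ρ := by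
      rw [Complex.sin_arg, habs]
    simp only [hcos, hsin]
    rw [mul_div_cancel₀ _ hρpos.ne', mul_div_cancel₀ _ hρpos.ne']
    exact hpe.symm
  · rintro ⟨θ, rfl⟩
    constructor
    · have h4 := key (ρ * Real.cos θ) (ρ * Real.sin θ)
      have h5 : (ρ * Real.cos θ) ^ 2 + (ρ * Real.sin θ) ^ 2 = 1 - ‖c‖ ^ 2 := by
        have h6 := Real.sin_sq_add_cos_sq θ
        nlinarith
      have h6 : ‖c + (ρ * Real.cos θ) • e₁ + (ρ * Real.sin θ) • e₂‖ ^ 2 = 1 := by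
        rw [h4]; linarith
      have h7 : ‖c + (ρ * Real.cos θ) • e₁ + (ρ * Real.sin θ) • e₂‖ = 1 := by
        nlinarith [norm_nonneg (c + (ρ * Real.cos θ) • e₁ + (ρ * Real.sin θ) • e₂)]
      simpa [unitSphere, mem_sphere_zero_iff_norm] using h7
    · have hvd : (ρ * Real.cos θ) • e₁ + (ρ * Real.sin θ) • e₂ ∈ P.direction :=
        Submodule.add_mem _ (Submodule.smul_mem _ _ hmem1) (Submodule.smul_mem _ _ hmem2)
      have h8 := AffineSubspace.vadd_mem_of_mem_direction hvd hcP
      have h9 : (ρ * Real.cos θ) • e₁ + (ρ * Real.sin θ) • e₂ + c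
          = c + (ρ * Real.cos θ) • e₁ + (ρ * Real.sin θ) • e₂ := by abel
      show c + (ρ * Real.cos θ) • e₁ + (ρ * Real.sin θ) • e₂ ∈ (P : Set (Euc n))
      rw [← h9]
      exact h8

lemma circle_f_continuous {n : ℕ} (c e₁ e₂ : Euc n) (ρ : ℝ) :
    Continuous (fun θ : ℝ => c + (ρ * Real.cos θ) • e₁ + (ρ * Real.sin θ) • e₂) := by
  fun_prop

lemma circle_range_preconnected {n : ℕ} (c e₁ e₂ : Euc n) (ρ : ℝ) :
    IsPreconnected (Set.range (fun θ : ℝ => c + (ρ * Real.cos θ) • e₁ + (ρ * Real.sin θ) • e₂)) := by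
  rw [← Set.image_univ]
  exact isPreconnected_univ.image _ (circle_f_continuous c e₁ e₂ ρ).continuousOn

lemma circle_range_infinite {n : ℕ} {c e₁ e₂ : Euc n} {ρ : ℝ} (hρ : 0 < ρ)
    (he11 : ⟪e₁, e₁⟫ = 1) (he12 : ⟪e₁, e₂⟫ = 0) :
    (Set.range (fun θ : ℝ => c + (ρ * Real.cos θ) • e₁ + (ρ * Real.sin θ) • e₂)).Infinite := by
  apply Set.infinite_of_injective_forall_mem
    (f := fun m : ℕ => c + (ρ * Real.cos ((m+1:ℝ)⁻¹)) • e₁ + (ρ * Real.sin ((m+1:ℝ)⁻¹)) • e₂)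
  · intro m m' hmm
    have hinner : ∀ θ : ℝ, ⟪e₁, c + (ρ * Real.cos θ) • e₁ + (ρ * Real.sin θ) • e₂ - c⟫
        = ρ * Real.cos θ := by
      intro θ
      have h1 : c + (ρ * Real.cos θ) • e₁ + (ρ * Real.sin θ) • e₂ - c
          = (ρ * Real.cos θ) • e₁ + (ρ * Real.sin θ) • e₂ := by abel
      rw [h1, inner_add_right, real_inner_smul_right, real_inner_smul_right, he11, he12]
      ring
    have h2 : ρ * Real.cos ((m+1:ℝ)⁻¹) = ρ * Real.cos ((m'+1:ℝ)⁻¹) := by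
      rw [← hinner ((m+1:ℝ)⁻¹), ← hinner ((m'+1:ℝ)⁻¹)]
      simp only at hmm
      rw [hmm]
    have h3 : Real.cos ((m+1:ℝ)⁻¹) = Real.cos ((m'+1:ℝ)⁻¹) :=
      mul_left_cancel₀ hρ.ne' h2
    have hmemI : ∀ m : ℕ, ((m+1:ℝ))⁻¹ ∈ Icc (0:ℝ) π := by
      intro m
      constructor
      · positivity
      · have h5 : ((m+1:ℝ))⁻¹ ≤ 1 := by
          rw [inv_le_one_iff₀]
          right; exact le_add_of_nonneg_left (Nat.cast_nonneg m)
        linarith [Real.pi_gt_three]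
    have h6 := Real.injOn_cos (hmemI m) (hmemI m') h3
    have h7 : m' = m := by
      field_simp at h6
      exact_mod_cast (by linarith : (m':ℝ) = m)
    exact h7.symm
  · intro m
    exact ⟨_, rfl⟩

lemma circle_arc_preconnected {n : ℕ} {c e₁ e₂ : Euc n} {ρ : ℝ}
    (he11 : ⟪e₁, e₁⟫ = 1) (he22 : ⟪e₂, e₂⟫ = 1) (he12 : ⟪e₁, e₂⟫ = 0)
    (ζ : Euc n) {δ : ℝ} (hδ : 0 ≤ δ) :
    IsPreconnected ((Set.range (fun θ : ℝ => c + (ρ * Real.cos θ) • e₁ + (ρ * Real.sin θ) • e₂))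
      ∩ {p | δ ≤ dist p ζ}) := by
  set f : ℝ → Euc n := fun θ => c + (ρ * Real.cos θ) • e₁ + (ρ * Real.sin θ) • e₂ with hf
  have he21 : ⟪e₂, e₁⟫ = (0:ℝ) := by rw [real_inner_comm]; exact he12
  set w : Euc n := c - ζ with hw
  set a : ℝ := 2 * ρ * ⟪w, e₁⟫ with ha
  set b : ℝ := 2 * ρ * ⟪w, e₂⟫ with hb
  set m : ℝ := δ ^ 2 - ‖w‖ ^ 2 - ρ ^ 2 with hm
  have hdist : ∀ θ : ℝ, dist (f θ) ζ ^ 2 = ‖w‖ ^ 2 + ρ ^ 2 + (a * Real.cos θ + b * Real.sin θ) := by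
    intro θ
    have h1 : f θ - ζ = w + (ρ * Real.cos θ) • e₁ + (ρ * Real.sin θ) • e₂ := by
      rw [hf, hw]; beta_reduce; abel
    rw [dist_eq_norm, h1, ← real_inner_self_eq_norm_sq]
    have hwe1 : ⟪e₁, w⟫ = ⟪w, e₁⟫ := real_inner_comm _ _
    have hwe2 : ⟪e₂, w⟫ = ⟪w, e₂⟫ := real_inner_comm _ _
    simp only [inner_add_left, inner_add_right, real_inner_smul_left, real_inner_smul_right,
      he11, he22, he12, he21, hwe1, hwe2, ha, hb]
    simp only [real_inner_self_eq_norm_sq]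
    have h2 := Real.sin_sq_add_cos_sq θ
    nlinarith [h2]
  have hiff : ∀ θ : ℝ, (δ ≤ dist (f θ) ζ) ↔ m ≤ a * Real.cos θ + b * Real.sin θ := by
    intro θ
    constructor
    · intro h
      have h2 : δ ^ 2 ≤ dist (f θ) ζ ^ 2 := pow_le_pow_left₀ hδ h 2
      rw [hdist θ] at h2
      rw [hm]; linarith
    · intro h
      have h2 : δ ^ 2 ≤ dist (f θ) ζ ^ 2 := by
        rw [hdist θ]; rw [hm] at h; linarith
      exact le_of_pow_le_pow_left₀ two_ne_zero dist_nonneg h2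
  obtain ⟨lo, hi, hIn, hOut⟩ := trig_arc a b m
  have himg : Set.range f ∩ {p | δ ≤ dist p ζ} = f '' Icc lo hi := by
    apply Subset.antisymm
    · rintro p ⟨⟨θ, rfl⟩, hp⟩
      obtain ⟨k, hk⟩ := hOut θ ((hiff θ).1 hp)
      refine ⟨θ - (k:ℝ) * (2 * π), hk, ?_⟩
      show f _ = f θ
      rw [hf]
      simp only [Real.cos_sub_int_mul_two_pi, Real.sin_sub_int_mul_two_pi]
    · rintro p ⟨θ, hθ, rfl⟩
      exact ⟨⟨θ, rfl⟩, (hiff θ).2 (hIn θ hθ)⟩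
  rw [himg]
  exact isPreconnected_Icc.image f (circle_f_continuous c e₁ e₂ ρ).continuousOn

lemma cap_mem_component {n : ℕ} {Ω : Set (Euc n)} {x u : Euc n} {ε : ℝ}
    (hx : ‖x‖ = 1) (hu : ‖u‖ = 1) (hε : ε ≤ 1/2)
    (hsub : ∀ p : Euc n, ‖p‖ = 1 → 1 - ε < ⟪x, p⟫ → p ∈ Ω)
    (hu2 : 1 - ε < ⟪x, u⟫) : u ∈ connectedComponentIn Ω x := by
  set cval : ℝ := ⟪x, u⟫ with hcval
  have hc1 : cval ≤ 1 := by
    have := real_inner_le_norm x u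
    rw [hx, hu] at this; simpa using this
  have hc0 : 1/2 ≤ cval := by linarith
  set q : ℝ → Euc n := fun t => (1 - t) • u + t • x with hq
  have hip : ∀ t : ℝ, ⟪x, q t⟫ = (1 - t) * cval + t := by
    intro t
    rw [hq]
    simp only [inner_add_right, real_inner_smul_right]
    rw [real_inner_self_eq_norm_sq, hx, ← hcval]
    ring
  have hiplb : ∀ t : ℝ, 0 ≤ t → t ≤ 1 → 1/2 ≤ ⟪x, q t⟫ := by
    intro t ht0 ht1
    rw [hip t]
    nlinarith
  have hnq : ∀ t : ℝ, 0 ≤ t → t ≤ 1 → ‖q t‖ ≠ 0 := by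
    intro t ht0 ht1 h0
    have hq0 : q t = 0 := norm_eq_zero.1 h0
    have := hiplb t ht0 ht1
    rw [hq0, inner_zero_right] at this
    linarith
  have hnormsq : ∀ t : ℝ, ‖q t‖ ^ 2 = (1 - t) ^ 2 + t ^ 2 + 2 * t * (1 - t) * cval := by
    intro t
    rw [hq, ← real_inner_self_eq_norm_sq]
    simp only [inner_add_left, inner_add_right, real_inner_smul_left, real_inner_smul_right]
    have hux : ⟪u, x⟫ = cval := by rw [real_inner_comm, ← hcval]
    rw [real_inner_self_eq_norm_sq, real_inner_self_eq_norm_sq, hx, hu, hux]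
    ring
  have hkey : ∀ t : ℝ, 0 ≤ t → t ≤ 1 → cval * ‖q t‖ ≤ ⟪x, q t⟫ := by
    intro t ht0 ht1
    have h1 : (cval * ‖q t‖) ^ 2 ≤ ⟪x, q t⟫ ^ 2 := by
      rw [mul_pow, hnormsq t, hip t]
      have h0 : 0 ≤ 1 - cval ^ 2 := by nlinarith
      have hprod : 0 ≤ t * (1 - t) * cval * (1 - cval ^ 2) :=
        mul_nonneg (mul_nonneg (mul_nonneg ht0 (by linarith)) (by linarith)) h0
      have hsq : 0 ≤ t ^ 2 * (1 - cval ^ 2) := mul_nonneg (sq_nonneg t) h0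
      nlinarith [hprod, hsq]
    have h2 : 0 ≤ cval * ‖q t‖ := mul_nonneg (by linarith) (norm_nonneg _)
    have h3 : 0 ≤ ⟪x, q t⟫ := le_trans (by norm_num) (hiplb t ht0 ht1)
    calc cval * ‖q t‖ = Real.sqrt ((cval * ‖q t‖) ^ 2) := (Real.sqrt_sq h2).symm
      _ ≤ Real.sqrt (⟪x, q t⟫ ^ 2) := Real.sqrt_le_sqrt h1
      _ = ⟪x, q t⟫ := Real.sqrt_sq h3
  set g : unitInterval → Euc n := fun t => ‖q (t : ℝ)‖⁻¹ • q (t : ℝ) with hg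
  have hgmem : ∀ t : unitInterval, g t ∈ Ω := by
    intro t
    have ht0 : (0:ℝ) ≤ t := t.2.1
    have ht1 : (t:ℝ) ≤ 1 := t.2.2
    have hnq' := hnq t ht0 ht1
    have hnqpos : 0 < ‖q (t:ℝ)‖ := lt_of_le_of_ne (norm_nonneg _) (Ne.symm hnq')
    apply hsub
    · rw [hg]
      simp only [norm_smul, Real.norm_eq_abs, abs_of_nonneg (inv_nonneg.2 hnqpos.le)]
      field_simp
    · rw [hg]
      simp only [real_inner_smul_right]
      have h4 : cval ≤ ‖q (t:ℝ)‖⁻¹ * ⟪x, q (t:ℝ)⟫ := by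
        have h5 := mul_le_mul_of_nonneg_left (hkey t ht0 ht1) (inv_nonneg.2 hnqpos.le)
        calc cval = ‖q (t:ℝ)‖⁻¹ * (cval * ‖q (t:ℝ)‖) := by field_simp
          _ ≤ ‖q (t:ℝ)‖⁻¹ * ⟪x, q (t:ℝ)⟫ := h5
      linarith
  have hgcont : Continuous g := by
    have hqc : Continuous (fun t : unitInterval => q (t : ℝ)) := by
      rw [hq]; fun_prop
    rw [hg]
    exact Continuous.smul (hqc.norm.inv₀ (fun t => hnq t t.2.1 t.2.2)) hqc
  have hg0 : g 0 = u := by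
    rw [hg]; simp [hq, hu]
  have hg1 : g 1 = x := by
    rw [hg]; simp [hq, hx]
  have himg : IsPreconnected (Set.range g) := by
    rw [← Set.image_univ]
    exact isPreconnected_univ.image _ hgcont.continuousOn
  have hsubΩ : Set.range g ⊆ Ω := by rintro p ⟨t, rfl⟩; exact hgmem t
  have hxin : x ∈ Set.range g := ⟨1, hg1⟩
  have huin : u ∈ Set.range g := ⟨0, hg0⟩
  exact himg.subset_connectedComponentIn hxin hsubΩ huin


lemma isCircle_param {n : ℕ} {S : Set (Euc n)} (h : IsCircle n S) :
    ∃ (c e₁ e₂ : Euc n) (ρ : ℝ), 0 < ρ ∧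
      ⟪e₁, e₁⟫ = 1 ∧ ⟪e₂, e₂⟫ = 1 ∧ ⟪e₁, e₂⟫ = 0 ∧
      S = Set.range (fun θ : ℝ => c + (ρ * Real.cos θ) • e₁ + (ρ * Real.sin θ) • e₂) := by
  obtain ⟨Q, hfr, hEq, hInf⟩ := h
  obtain ⟨p, hp, q, hq, hpq⟩ := hInf.nontrivial
  rw [hEq] at hp hq
  obtain ⟨c, e₁, e₂, ρ, h0, h1, h2, h3, h4⟩ := circle_param Q hfr hp hq hpq
  exact ⟨c, e₁, e₂, ρ, h0, h1, h2, h3, hEq.trans h4⟩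

lemma near_cap {n : ℕ} {Ω : Set (Euc n)} {x u : Euc n} {ε : ℝ}
    (hx : ‖x‖ = 1) (hu : ‖u‖ = 1) (hε0 : 0 < ε) (hε : ε ≤ 1/2)
    (hsub : ∀ p : Euc n, ‖p‖ = 1 → 1 - ε < ⟪x, p⟫ → p ∈ Ω)
    (hd : dist x u < Real.sqrt ε) : u ∈ connectedComponentIn Ω x := by
  apply cap_mem_component hx hu hε hsub
  have h1 : dist x u ^ 2 = 2 - 2 * ⟪x, u⟫ := by
    rw [dist_eq_norm, norm_sub_sq_real, hx, hu]; ring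
  have h2 : dist x u ^ 2 < ε := by
    nlinarith [Real.sq_sqrt hε0.le, dist_nonneg (x := x) (y := u)]
  nlinarith

lemma mem_unitSphere_norm {n : ℕ} {p : Euc n} (hp : p ∈ unitSphere n) : ‖p‖ = 1 := by
  simpa [unitSphere, mem_sphere_zero_iff_norm] using hp


/-- Group-free form of Lemma 4.6: if `Ω = S^n \ Λ` satisfies WKM and has at least
two connected components, then `Λ` is doubly stable. -/
theorem doublyStable_of_WKM_of_two_components
    (n : ℕ) (hn : 2 ≤ n) (Λ : Set (Euc n)) (hΛsub : Λ ⊆ unitSphere n)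
    (hΛcl : IsClosed Λ) (hWKM : WKM (unitSphere n \ Λ))
    (htwo : ∃ x ∈ unitSphere n \ Λ, ∃ y ∈ unitSphere n \ Λ,
      connectedComponentIn (unitSphere n \ Λ) x ≠
        connectedComponentIn (unitSphere n \ Λ) y) :
    DoublyStable n Λ := by
  classical
  intro ξ hξ
  obtain ⟨x, hxΩ, y, hyΩ, hUV⟩ := htwo
  set Ω : Set (Euc n) := unitSphere n \ Λ with hΩdef
  have hxS : x ∈ unitSphere n := hxΩ.1
  have hyS : y ∈ unitSphere n := hyΩ.1
  have hξS : ξ ∈ unitSphere n := hΛsub hξ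
  have hxnorm : ‖x‖ = 1 := mem_unitSphere_norm hxS
  have hynorm : ‖y‖ = 1 := mem_unitSphere_norm hyS
  have hξx : ξ ≠ x := fun h => hxΩ.2 (h ▸ hξ)
  have hξy : ξ ≠ y := fun h => hyΩ.2 (h ▸ hξ)
  have hxy : x ≠ y := by rintro rfl; exact hUV rfl
  -- the circle through ξ, x, y
  have hcosph : EuclideanGeometry.Cospherical ({ξ, x, y} : Set (Euc n)) := by
    refine ⟨0, 1, ?_⟩
    rintro p (rfl | rfl | rfl) <;>
      simpa [dist_eq_norm] using mem_unitSphere_norm (by assumption)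
  have hAI : AffineIndependent ℝ ![ξ, x, y] :=
    hcosph.affineIndependent_of_ne hξx hξy hxy
  set P : AffineSubspace ℝ (Euc n) := affineSpan ℝ (Set.range ![ξ, x, y]) with hPdef
  have hfr : Module.finrank ℝ P.direction = 2 := by
    rw [hPdef, direction_affineSpan]
    exact hAI.finrank_vectorSpan (by simp)
  set C : Set (Euc n) := unitSphere n ∩ (P : Set (Euc n)) with hCdef
  have hξC : ξ ∈ C := ⟨hξS, subset_affineSpan ℝ _ ⟨0, rfl⟩⟩
  have hxC : x ∈ C := ⟨hxS, subset_affineSpan ℝ _ ⟨1, rfl⟩⟩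
  have hyC : y ∈ C := ⟨hyS, subset_affineSpan ℝ _ ⟨2, rfl⟩⟩
  obtain ⟨c, e₁, e₂, ρ, hρ, he11, he22, he12, hCeq⟩ := circle_param P hfr hξC hxC hξx
  have hCinf : C.Infinite := by
    rw [hCdef, hCeq]; exact circle_range_infinite hρ he11 he12
  have hCcirc : IsCircle n C := ⟨P, hfr, hCdef, hCinf⟩
  refine ⟨C, hCcirc, hξC, ?_⟩
  intro Ck hCk hconv
  by_contra hnt
  rw [Set.not_nontrivial_iff] at hnt
  -- basic facts about the Ck
  have hCksub : ∀ k, Ck k ⊆ unitSphere n := by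
    intro k
    obtain ⟨Q, _, hQe, _⟩ := hCk k
    rw [hQe]; exact inter_subset_left
  have hCkne : ∀ k, (Ck k).Nonempty := by
    intro k
    obtain ⟨Q, _, _, hInf⟩ := hCk k
    exact hInf.nonempty
  have hCne : C.Nonempty := ⟨ξ, hξC⟩
  have hSbd : Bornology.IsBounded (unitSphere n) :=
    Metric.isBounded_closedBall.subset Metric.sphere_subset_closedBall
  have hfin : ∀ k, EMetric.hausdorffEdist (Ck k) C ≠ ⊤ := fun k =>
    Metric.hausdorffEdist_ne_top_of_nonempty_of_bounded (hCkne k) hCne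
      (hSbd.subset (hCksub k)) (hSbd.subset (inter_subset_left))
  -- eventually, points of `Ck k` approximate any point of `C`
  have hnear : ∀ z ∈ C, ∀ η : ℝ, 0 < η →
      ∀ᶠ k in Filter.atTop, ∃ u ∈ Ck k, dist z u < η := by
    intro z hz η hη
    have h1 : ∀ᶠ k in Filter.atTop, Metric.hausdorffDist (Ck k) C < η :=
      hconv.eventually_lt_const hη
    filter_upwards [h1] with k hk
    obtain ⟨u, hu1, hu2⟩ := Metric.exists_dist_lt_of_hausdorffDist_lt' hz hk (hfin k)
    exact ⟨u, hu1, by rwa [dist_comm]⟩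
  -- spherical caps around x and y inside Ω
  obtain ⟨rx, hrx, hballx⟩ : ∃ r > 0, Metric.ball x r ⊆ Λᶜ :=
    Metric.isOpen_iff.1 hΛcl.isOpen_compl x hxΩ.2
  obtain ⟨ry, hry, hbally⟩ : ∃ r > 0, Metric.ball y r ⊆ Λᶜ :=
    Metric.isOpen_iff.1 hΛcl.isOpen_compl y hyΩ.2
  set εx : ℝ := min (1/2) (rx^2/2) with hεxdef
  set εy : ℝ := min (1/2) (ry^2/2) with hεydef
  have hεx0 : 0 < εx := lt_min (by norm_num) (by positivity)
  have hεy0 : 0 < εy := lt_min (by norm_num) (by positivity)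
  have hεxh : εx ≤ 1/2 := min_le_left _ _
  have hεyh : εy ≤ 1/2 := min_le_left _ _
  have hcapx : ∀ p : Euc n, ‖p‖ = 1 → 1 - εx < ⟪x, p⟫ → p ∈ Ω := by
    intro p hp hip
    refine ⟨by simpa [unitSphere, mem_sphere_zero_iff_norm] using hp, ?_⟩
    have h1 : dist p x ^ 2 = 2 - 2 * ⟪x, p⟫ := by
      rw [dist_eq_norm, norm_sub_sq_real, hp, hxnorm, real_inner_comm]; ring
    have h2 : εx ≤ rx^2/2 := min_le_right _ _
    have h3 : dist p x < rx := by nlinarith [dist_nonneg (x := p) (y := x)]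
    exact hballx (Metric.mem_ball.2 h3)
  have hcapy : ∀ p : Euc n, ‖p‖ = 1 → 1 - εy < ⟪y, p⟫ → p ∈ Ω := by
    intro p hp hip
    refine ⟨by simpa [unitSphere, mem_sphere_zero_iff_norm] using hp, ?_⟩
    have h1 : dist p y ^ 2 = 2 - 2 * ⟪y, p⟫ := by
      rw [dist_eq_norm, norm_sub_sq_real, hp, hynorm, real_inner_comm]; ring
    have h2 : εy ≤ ry^2/2 := min_le_right _ _
    have h3 : dist p y < ry := by nlinarith [dist_nonneg (x := p) (y := y)]
    exact hbally (Metric.mem_ball.2 h3)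
  -- eventually the slices Ck k ∩ Λ are nonempty
  have hslice : ∀ᶠ k in Filter.atTop, (Ck k ∩ Λ).Nonempty := by
    filter_upwards [hnear x hxC _ (Real.sqrt_pos.2 hεx0), hnear y hyC _ (Real.sqrt_pos.2 hεy0)]
      with k hu hv
    obtain ⟨u, huk, hud⟩ := hu
    obtain ⟨v, hvk, hvd⟩ := hv
    by_contra hempty
    rw [Set.not_nonempty_iff_eq_empty] at hempty
    have hCkΩ : Ck k ⊆ Ω := by
      intro p hp
      refine ⟨hCksub k hp, fun hpΛ => ?_⟩
      exact absurd (Set.mem_inter hp hpΛ) (by rw [hempty]; exact notMem_empty p)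
    have humem : u ∈ connectedComponentIn Ω x :=
      near_cap hxnorm (mem_unitSphere_norm (hCksub k huk)) hεx0 hεxh hcapx hud
    have hvmem : v ∈ connectedComponentIn Ω y :=
      near_cap hynorm (mem_unitSphere_norm (hCksub k hvk)) hεy0 hεyh hcapy hvd
    obtain ⟨c', e₁', e₂', ρ', hρ', h1', h2', h3', hkEq⟩ := isCircle_param (hCk k)
    have hpc : IsPreconnected (Ck k) := by
      rw [hkEq]; exact circle_range_preconnected c' e₁' e₂' ρ'
    have hsub2 : Ck k ⊆ connectedComponentIn Ω u :=
      hpc.subset_connectedComponentIn huk hCkΩ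
    have h1 : connectedComponentIn Ω x = connectedComponentIn Ω u :=
      connectedComponentIn_eq humem
    have h2 : connectedComponentIn Ω y = connectedComponentIn Ω v :=
      connectedComponentIn_eq hvmem
    have h3 : v ∈ connectedComponentIn Ω x := h1 ▸ hsub2 hvk
    exact hUV ((connectedComponentIn_eq h3).trans h2.symm)
  -- pick the accumulation point ζ of the slices
  obtain ⟨N₀, hN₀⟩ := Filter.eventually_atTop.1 hslice
  set pk : ℕ → Euc n := fun k => if h : (Ck k ∩ Λ).Nonempty then h.choose else ξ with hpkdef
  have hpkΛ : ∀ k, pk k ∈ Λ := by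
    intro k
    rw [hpkdef]
    dsimp only
    split
    · next h => exact h.choose_spec.2
    · exact hξ
  have hpkC : ∀ k, N₀ ≤ k → pk k ∈ Ck k ∩ Λ := by
    intro k hk
    rw [hpkdef]
    dsimp only
    rw [dif_pos (hN₀ k hk)]
    exact (hN₀ k hk).choose_spec
  have hΛcpt : IsCompact Λ :=
    (isCompact_sphere (0 : Euc n) 1).of_isClosed_subset hΛcl hΛsub
  obtain ⟨ζ, hζΛ, φ, hφmono, hφtend⟩ := hΛcpt.tendsto_subseq hpkΛ
  have hζlim : ζ ∈ setLimsup (fun k => Ck k ∩ Λ) := by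
    rw [setLimsup]
    refine Set.mem_iInter.2 fun N => ?_
    refine mem_closure_of_tendsto hφtend ?_
    filter_upwards [Filter.eventually_ge_atTop (max N N₀)] with j hj
    have hφj : max N N₀ ≤ φ j := le_trans hj (hφmono.le_apply)
    exact Set.mem_biUnion (le_trans (le_max_left _ _) hφj)
      (hpkC (φ j) (le_trans (le_max_right _ _) hφj))
  -- the limsup is contained in {ζ}
  have honly : ∀ z ∈ setLimsup (fun k => Ck k ∩ Λ), z = ζ := fun z hz => hnt hz hζlim
  -- distance scale
  have hζx : ζ ≠ x := fun h => hxΩ.2 (h ▸ hζΛ)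
  have hζy : ζ ≠ y := fun h => hyΩ.2 (h ▸ hζΛ)
  set δ : ℝ := (1/2) * min (dist ζ x) (dist ζ y) with hδdef
  have hδpos : 0 < δ := by
    apply mul_pos (by norm_num)
    exact lt_min (dist_pos.2 hζx) (dist_pos.2 hζy)
  -- eventually the slices are inside ball ζ δ
  have hshrink : ∀ᶠ k in Filter.atTop, ∀ p ∈ Ck k ∩ Λ, dist p ζ < δ := by
    by_contra hcon
    rw [Filter.not_eventually] at hcon
    obtain ⟨ψ, hψmono, hψ⟩ := Filter.extraction_of_frequently_atTop hcon
    have hψ' : ∀ j, ∃ p ∈ Ck (ψ j) ∩ Λ, δ ≤ dist p ζ := by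
      intro j
      have h := hψ j
      push_neg at h
      exact h
    choose r hr hrd using hψ'
    obtain ⟨ζ', hζ'Λ, σ, hσmono, hσtend⟩ := hΛcpt.tendsto_subseq (fun j => (hr j).2)
    have hζ'lim : ζ' ∈ setLimsup (fun k => Ck k ∩ Λ) := by
      rw [setLimsup]
      refine Set.mem_iInter.2 fun N => ?_
      refine mem_closure_of_tendsto hσtend ?_
      filter_upwards [Filter.eventually_ge_atTop N] with j hj
      have h1 : N ≤ ψ (σ j) := le_trans hj (le_trans (hσmono.le_apply) (hψmono.le_apply))
      exact Set.mem_biUnion h1 (hr (σ j))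
    have heq : ζ' = ζ := honly ζ' hζ'lim
    have hd : δ ≤ dist ζ' ζ := by
      refine ge_of_tendsto (hσtend.dist (tendsto_const_nhds (x := ζ))) ?_
      filter_upwards with j
      exact hrd (σ j)
    rw [heq, dist_self] at hd
    linarith
  -- final contradiction at one large k
  have hδx : 2 * δ ≤ dist ζ x := by
    rw [hδdef]
    have := min_le_left (dist ζ x) (dist ζ y)
    linarith
  have hδy : 2 * δ ≤ dist ζ y := by
    rw [hδdef]
    have := min_le_right (dist ζ x) (dist ζ y)
    linarith
  have hcomb := ((hnear x hxC _ (lt_min (Real.sqrt_pos.2 hεx0) hδpos)).and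
    ((hnear y hyC _ (lt_min (Real.sqrt_pos.2 hεy0) hδpos)).and hshrink)).exists
  obtain ⟨k, ⟨u, huk, hud⟩, ⟨v, hvk, hvd⟩, hsh⟩ := hcomb
  set A : Set (Euc n) := Ck k ∩ {p | δ ≤ dist p ζ} with hAdef
  obtain ⟨c', e₁', e₂', ρ', hρ', h1', h2', h3', hkEq⟩ := isCircle_param (hCk k)
  have hApre : IsPreconnected A := by
    rw [hAdef, hkEq]
    exact circle_arc_preconnected h1' h2' h3' ζ hδpos.le
  have hAsub : A ⊆ Ω := by
    rintro p ⟨hpk, hpd⟩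
    refine ⟨hCksub k hpk, fun hpΛ => ?_⟩
    exact absurd (hsh p ⟨hpk, hpΛ⟩) (not_lt.2 hpd)
  have huA : u ∈ A := by
    refine ⟨huk, ?_⟩
    have h5 : dist x u < δ := lt_of_lt_of_le hud (min_le_right _ _)
    show δ ≤ dist u ζ
    rw [dist_comm u ζ]
    have h7 : dist ζ x ≤ dist ζ u + dist u x := dist_triangle ζ u x
    have h8 : dist u x = dist x u := dist_comm u x
    linarith
  have hvA : v ∈ A := by
    refine ⟨hvk, ?_⟩
    have h5 : dist y v < δ := lt_of_lt_of_le hvd (min_le_right _ _)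
    show δ ≤ dist v ζ
    rw [dist_comm v ζ]
    have h7 : dist ζ y ≤ dist ζ v + dist v y := dist_triangle ζ v y
    have h8 : dist v y = dist y v := dist_comm v y
    linarith
  have humem : u ∈ connectedComponentIn Ω x :=
    near_cap hxnorm (mem_unitSphere_norm (hCksub k huk)) hεx0 hεxh hcapx
      (lt_of_lt_of_le hud (min_le_left _ _))
  have hvmem : v ∈ connectedComponentIn Ω y :=
    near_cap hynorm (mem_unitSphere_norm (hCksub k hvk)) hεy0 hεyh hcapy
      (lt_of_lt_of_le hvd (min_le_left _ _))
  have hsub2 : A ⊆ connectedComponentIn Ω u :=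
    hApre.subset_connectedComponentIn huA hAsub
  have h1 : connectedComponentIn Ω x = connectedComponentIn Ω u :=
    connectedComponentIn_eq humem
  have h2 : connectedComponentIn Ω y = connectedComponentIn Ω v :=
    connectedComponentIn_eq hvmem
  have h3 : v ∈ connectedComponentIn Ω x := h1 ▸ hsub2 hvA
  exact hUV ((connectedComponentIn_eq h3).trans h2.symm)
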